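/- arXiv:2203.07175 — 3 statements merged into one kernel-verified Lean document; each statement's English description precedes it below -/
import Mathlib

section
/- Let 𝓗 be a real Hilbert space and H : 𝓗 → 𝓗 a continuous linear operator that is self-adjoint, positive semidefinite (⟪H x, x⟫ ≥ 0 for all x), and has closed range. Let b ∈ range(H) and let V̂ ∈ range(H) be the unique element of range(H) with H V̂ = b. For each ε > 0 let V_ε be the unique solution of (H + ε·I) V_ε = b. Then V_ε → V̂ in norm as ε → 0⁺. -/
open scoped RealInnerProductSpace

/-- Convergence of Tikhonov-regularized solutions to the Moore–Penrose pseudoinverse solution: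
if `H` is self-adjoint, positive semidefinite, with closed range, `b ∈ range H`, `V̂ ∈ range H`
solves `H V̂ = b`, and `V ε` solves `(H + ε I) (V ε) = b` for each `ε > 0`, then
`V ε → V̂` as `ε → 0⁺`. -/
theorem stmt_5 {𝓗 : Type*} [NormedAddCommGroup 𝓗] [InnerProductSpace ℝ 𝓗] [CompleteSpace 𝓗]
    (H : 𝓗 →L[ℝ] 𝓗)
    (hsa : ∀ x y : 𝓗, ⟪H x, y⟫ = ⟪x, H y⟫)
    (hpsd : ∀ x : 𝓗, 0 ≤ ⟪H x, x⟫)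
    (hcr : IsClosed (LinearMap.range (H : 𝓗 →ₗ[ℝ] 𝓗) : Set 𝓗))
    (b Vhat : 𝓗) (hVhat : Vhat ∈ LinearMap.range (H : 𝓗 →ₗ[ℝ] 𝓗)) (hHVhat : H Vhat = b)
    (V : ℝ → 𝓗) (hV : ∀ ε : ℝ, 0 < ε → H (V ε) + ε • V ε = b) :
    Filter.Tendsto V (nhdsWithin 0 (Set.Ioi 0)) (nhds Vhat) := by
  obtain ⟨u, hu⟩ := hVhat
  set C : ℝ := 2 * ‖u‖ * ‖Vhat‖ with hC
  have hC0 : 0 ≤ C := by positivity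
  -- key estimate: ‖V ε - Vhat‖^2 ≤ ε * C for ε > 0
  have key : ∀ ε : ℝ, 0 < ε → ‖V ε - Vhat‖ ^ 2 ≤ ε * C := by
    intro ε hε
    set W : 𝓗 := V ε - Vhat with hW
    have hHW : H W = -(ε • V ε) := by
      have := hV ε hε
      rw [hW, map_sub, hHVhat]
      rw [eq_comm, ← sub_eq_iff_eq_add] at this
      rw [← this]; abel
    -- positivity gives ‖W‖² ≤ -⟪Vhat, W⟫
    have h1 : ‖W‖ ^ 2 ≤ -⟪Vhat, W⟫ := by
      have hpos := hpsd W
      have hexp : ⟪H W, W⟫ = -ε * (‖W‖ ^ 2 + ⟪Vhat, W⟫) := by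
        have : V ε = W + Vhat := by rw [hW]; abel
        rw [hHW, this, inner_neg_left, inner_smul_left, inner_add_left,
          real_inner_self_eq_norm_sq]
        simp only [conj_trivial]; ring
      rw [hexp] at hpos
      nlinarith [hpos, hε]
    -- self-adjointness: ⟪Vhat, W⟫ = -ε ⟪u, V ε⟫
    have h2 : ⟪Vhat, W⟫ = -ε * ⟪u, V ε⟫ := by
      rw [← hu, ContinuousLinearMap.coe_coe, hsa, hHW, inner_neg_right, inner_smul_right]; ring
    -- bound ‖W‖ ≤ ‖Vhat‖
    have h3 : ‖W‖ ≤ ‖Vhat‖ := by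
      have hcs : -⟪Vhat, W⟫ ≤ ‖Vhat‖ * ‖W‖ := by
        have := abs_real_inner_le_norm Vhat W
        have := neg_abs_le ⟪Vhat, W⟫
        linarith
      by_contra h
      push_neg at h
      have hlt := mul_lt_mul_of_pos_right h (lt_of_le_of_lt (norm_nonneg Vhat) h)
      nlinarith
    -- conclude
    have h4 : ‖W‖ ^ 2 ≤ ε * (‖u‖ * ‖V ε‖) := by
      have hcs : ⟪u, V ε⟫ ≤ ‖u‖ * ‖V ε‖ := by
        have := abs_real_inner_le_norm u (V ε)
        have := le_abs_self ⟪u, V ε⟫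
        linarith
      rw [h2] at h1
      nlinarith
    have h5 : ‖V ε‖ ≤ 2 * ‖Vhat‖ := by
      have : ‖V ε‖ ≤ ‖W‖ + ‖Vhat‖ := by
        have : V ε = W + Vhat := by rw [hW]; abel
        rw [this]; exact norm_add_le _ _
      linarith
    calc ‖W‖ ^ 2 ≤ ε * (‖u‖ * ‖V ε‖) := h4
      _ ≤ ε * C := by
          rw [hC]
          have : ‖u‖ * ‖V ε‖ ≤ 2 * ‖u‖ * ‖Vhat‖ := by nlinarith [norm_nonneg u]
          nlinarith
  -- squeeze
  rw [← tendsto_sub_nhds_zero_iff]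
  rw [tendsto_zero_iff_norm_tendsto_zero]
  have hb : Filter.Tendsto (fun ε : ℝ => Real.sqrt (ε * C)) (nhdsWithin 0 (Set.Ioi 0))
      (nhds 0) := by
    have : Filter.Tendsto (fun ε : ℝ => ε * C) (nhdsWithin 0 (Set.Ioi 0)) (nhds 0) := by
      have h := ((continuous_id.mul (continuous_const : Continuous fun _ : ℝ => C)).tendsto
        (0 : ℝ)).mono_left (nhdsWithin_le_nhds (s := Set.Ioi 0))
      simpa [Pi.mul_def] using h
    simpa [Function.comp_def] using (Real.continuous_sqrt.tendsto 0).comp this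
  refine squeeze_zero' (Filter.Eventually.of_forall fun ε => norm_nonneg _) ?_ hb
  filter_upwards [self_mem_nhdsWithin] with ε (hε : ε ∈ Set.Ioi 0)
  have := key ε hε
  have h := Real.sqrt_le_sqrt this
  rwa [Real.sqrt_sq (norm_nonneg _)] at h
end

section
/- Let 𝓗 be a real Hilbert space and H : 𝓗 → 𝓗 a continuous linear operator that is self-adjoint and positive semidefinite (⟪H x, x⟫ ≥ 0 for all x). If V̂ ∈ range(H), then ε · (H + εI)⁻¹ V̂ → 0 in norm as ε → 0⁺. -/
open scoped RealInnerProductSpace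

/-- Key step of Theorem 3.3: if `V̂ ∈ range H` and `Y ε = ε (H + ε I)⁻¹ V̂` (i.e.
`(H + εI)(Y ε) = ε V̂`) for `ε > 0`, then `Y ε → 0` in norm as `ε → 0⁺`. -/
theorem stmt_8 {𝓗 : Type*} [NormedAddCommGroup 𝓗] [InnerProductSpace ℝ 𝓗] [CompleteSpace 𝓗]
    (H : 𝓗 →L[ℝ] 𝓗)
    (hsa : ∀ x y : 𝓗, ⟪H x, y⟫ = ⟪x, H y⟫)
    (hpsd : ∀ x : 𝓗, 0 ≤ ⟪H x, x⟫)
    (Vhat : 𝓗) (hVhat : Vhat ∈ LinearMap.range (H : 𝓗 →ₗ[ℝ] 𝓗))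
    (Y : ℝ → 𝓗) (hY : ∀ ε : ℝ, 0 < ε → H (Y ε) + ε • Y ε = ε • Vhat) :
    Filter.Tendsto Y (nhdsWithin 0 (Set.Ioi 0)) (nhds 0) := by
  obtain ⟨W, hW⟩ := hVhat
  -- key bound: for ε > 0, ‖Y ε‖ ≤ 2 * ε * ‖W‖
  have key : ∀ ε : ℝ, 0 < ε → ‖Y ε‖ ≤ 2 * ε * ‖W‖ := by
    intro ε hε
    set U : 𝓗 := Y ε - ε • W with hU
    have hEq : H U + ε • U = -(ε ^ 2) • W := by
      have h1 := hY ε hε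
      simp only [hU, map_sub, map_smul, smul_sub]
      rw [← hW] at h1
      have : H (Y ε) + ε • Y ε - (ε • H W + ε • ε • W) = -(ε ^ 2) • W := by
        rw [h1]; module
      rw [← this]; abel
    -- inner product with U
    have hinner : ⟪H U, U⟫ + ε * ‖U‖ ^ 2 = -(ε ^ 2) * ⟪W, U⟫ := by
      have := congrArg (fun z => ⟪z, U⟫) hEq
      simpa [inner_add_left, inner_smul_left, real_inner_self_eq_norm_sq,
        mul_comm] using this
    have hUb : ‖U‖ ≤ ε * ‖W‖ := by
      have h1 : ε * ‖U‖ ^ 2 ≤ ε ^ 2 * (‖W‖ * ‖U‖) := by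
        have hcs : -⟪W, U⟫ ≤ ‖W‖ * ‖U‖ := by
          have := abs_real_inner_le_norm W U
          nlinarith [abs_nonneg (⟪W, U⟫), neg_abs_le (⟪W, U⟫)]
        nlinarith [hpsd U, hinner]
      rcases eq_or_lt_of_le (norm_nonneg U) with h0 | h0
      · rw [← h0]; positivity
      · nlinarith [h1, mul_pos hε h0]
    calc ‖Y ε‖ = ‖U + ε • W‖ := by rw [hU]; congr 1; abel
      _ ≤ ‖U‖ + ‖ε • W‖ := norm_add_le _ _
      _ ≤ ε * ‖W‖ + ε * ‖W‖ := by
          rw [norm_smul, Real.norm_eq_abs, abs_of_pos hε]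
          linarith
      _ = 2 * ε * ‖W‖ := by ring
  -- conclude via squeeze
  rw [tendsto_zero_iff_norm_tendsto_zero]
  have hg : Filter.Tendsto (fun ε : ℝ => 2 * ε * ‖W‖) (nhdsWithin 0 (Set.Ioi 0)) (nhds 0) := by
    have : Filter.Tendsto (fun ε : ℝ => 2 * ε * ‖W‖) (nhds 0) (nhds (2 * 0 * ‖W‖)) := by
      exact (Filter.Tendsto.const_mul 2 Filter.tendsto_id).mul_const ‖W‖
    simpa using this.mono_left nhdsWithin_le_nhds
  exact squeeze_zero' (eventually_nhdsWithin_of_forall fun ε hε => norm_nonneg _)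
    (eventually_nhdsWithin_of_forall fun ε hε => key ε hε) hg
end

section
/- Let Ω ⊂ ℝᵈ be a bounded measurable set, u, λ : ℝᵈ → ℝ continuously differentiable with bounded gradients, and V : ℝᵈ → ℝᵈ a continuously differentiable vector field with compact support. Define for small t the pulled-back Dirichlet form e(t) := ∫_Ω det(1 + t·DV(x)) · ⟨ ((1 + t·DV(x))⁻¹)ᵀ ∇u(x), ((1 + t·DV(x))⁻¹)ᵀ ∇λ(x) ⟩ dx. Then e is differentiable at t = 0 with e′(0) = ∫_Ω ( div V(x) · ⟨∇u(x), ∇λ(x)⟩ − ⟨∇u(x), (DV(x) + DV(x)ᵀ) ∇λ(x)⟩ ) dx. -/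
open Matrix MeasureTheory
open Metric Polynomial

attribute [local instance] Matrix.linftyOpNormedRing Matrix.linftyOpNormedAlgebra

noncomputable section StmtAux
variable {d : ℕ}

/-- entry evaluation as a continuous linear map -/
private def entryCLM (i j : Fin d) : Matrix (Fin d) (Fin d) ℝ →L[ℝ] ℝ :=
  LinearMap.toContinuousLinearMap
    { toFun := fun M => M i j
      map_add' := fun _ _ => rfl
      map_smul' := fun _ _ => rfl }

private theorem hasDerivAt_det_aux (A : Matrix (Fin d) (Fin d) ℝ) (t : ℝ)
    (hu : IsUnit (1 + t • A)) :
    HasDerivAt (fun s : ℝ => (1 + s • A).det)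
      ((1 + t • A).det * ((1 + t • A)⁻¹ * A).trace) t := by
  have hudet : IsUnit (1 + t • A).det := (Matrix.isUnit_iff_isUnit_det _).mp hu
  set B := 1 + t • A with hB
  set M := B⁻¹ * A with hM
  set q := (det (1 + (X : ℝ[X]) • M.map C)).divX.divX with hqdef
  set r := q.comp (X - C t) with hrdef
  have key : ∀ s : ℝ, (1 + s • A).det =
      B.det * (1 + M.trace * (s - t) + r.eval s * (s - t) ^ 2) := by
    intro s
    have hfact : (1 : Matrix (Fin d) (Fin d) ℝ) + s • A = B * (1 + (s - t) • M) := by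
      rw [Matrix.mul_add, Matrix.mul_one, Matrix.mul_smul, hM, ← Matrix.mul_assoc,
        Matrix.mul_nonsing_inv B hudet, Matrix.one_mul, hB]
      rw [add_assoc, ← add_smul]
      ring_nf
    rw [hfact, Matrix.det_mul]
    have : r.eval s = q.eval (s - t) := by simp [hrdef, eval_comp]
    rw [this]
    exact congrArg (fun z => B.det * z) (Matrix.det_one_add_smul (s - t) M)
  have hq : HasDerivAt (fun s : ℝ =>
      B.det * (1 + M.trace * (s - t) + r.eval s * (s - t) ^ 2))
      (B.det * M.trace) t := by
    have h1 : HasDerivAt (fun s : ℝ => s - t) 1 t := (hasDerivAt_id t).sub_const t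
    have h2 : HasDerivAt (fun s : ℝ => M.trace * (s - t)) M.trace t := by
      simpa using h1.const_mul M.trace
    have h3 : HasDerivAt (fun s : ℝ => r.eval s) (r.derivative.eval t) t := r.hasDerivAt t
    have h4 : HasDerivAt (fun s : ℝ => (s - t) ^ 2) (2 * (t - t) ^ 1 * 1) t := h1.pow 2
    have h5 := ((h2.const_add (1:ℝ)).add (h3.mul h4)).const_mul B.det
    simpa using h5
  exact hq.congr_of_eventuallyEq (Filter.Eventually.of_forall key)

private theorem hasDerivAt_inv_entry (A : Matrix (Fin d) (Fin d) ℝ) (t : ℝ)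
    (u : (Matrix (Fin d) (Fin d) ℝ)ˣ) (hu : (u : Matrix (Fin d) (Fin d) ℝ) = 1 + t • A)
    (i j : Fin d) :
    HasDerivAt (fun s : ℝ => (1 + s • A)⁻¹ i j)
      ((-((1 + t • A)⁻¹ * A * (1 + t • A)⁻¹)) i j) t := by
  have hB : HasDerivAt (fun s : ℝ => 1 + s • A) A t := by
    exact (((hasDerivAt_id' t).smul_const A).const_add (1 : Matrix (Fin d) (Fin d) ℝ)).congr_deriv (one_smul ℝ A)
  have h1 := (hasFDerivAt_ringInverse (𝕜 := ℝ) u)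
  rw [hu] at h1
  have h2 := h1.comp_hasDerivAt t hB
  have hcu : ((u⁻¹ : (Matrix (Fin d) (Fin d) ℝ)ˣ) : Matrix (Fin d) (Fin d) ℝ) = (1 + t • A)⁻¹ := by
    rw [Matrix.coe_units_inv, hu]
  have h3 : HasDerivAt (fun s : ℝ => (1 + s • A)⁻¹)
      (-((1 + t • A)⁻¹ * A * (1 + t • A)⁻¹)) t := by
    have heq : (fun s : ℝ => (1 + s • A)⁻¹) = fun s : ℝ => Ring.inverse (1 + s • A) :=
      funext fun s => Matrix.nonsing_inv_eq_ringInverse _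
    rw [heq]
    simp [hcu, ContinuousLinearMap.mulLeftRight_apply] at h2
    exact h2
  have h4 := ((entryCLM i j).hasFDerivAt).comp_hasDerivAt t h3
  exact h4

/-- The derivative expression, with inverse matrix passed explicitly. -/
private def Psi (d : ℕ) (p : ℝ × Matrix (Fin d) (Fin d) ℝ × (Fin d → ℝ) × (Fin d → ℝ))
    (R : Matrix (Fin d) (Fin d) ℝ) : ℝ :=
  (1 + p.1 • p.2.1).det * (R * p.2.1).trace * ((Rᵀ *ᵥ p.2.2.1) ⬝ᵥ (Rᵀ *ᵥ p.2.2.2)) +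
    (1 + p.1 • p.2.1).det *
      ((((-(R * p.2.1 * R))ᵀ *ᵥ p.2.2.1) ⬝ᵥ (Rᵀ *ᵥ p.2.2.2)) +
       ((Rᵀ *ᵥ p.2.2.1) ⬝ᵥ ((-(R * p.2.1 * R))ᵀ *ᵥ p.2.2.2)))

private def Phi (d : ℕ) (p : ℝ × Matrix (Fin d) (Fin d) ℝ × (Fin d → ℝ) × (Fin d → ℝ)) : ℝ :=
  Psi d p (1 + p.1 • p.2.1)⁻¹

private theorem hasDerivAt_main (A : Matrix (Fin d) (Fin d) ℝ) (a b : Fin d → ℝ) (t : ℝ)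
    (hu : IsUnit (1 + t • A)) :
    HasDerivAt (fun s : ℝ => (1 + s • A).det *
        ((((1 + s • A)⁻¹)ᵀ *ᵥ a) ⬝ᵥ (((1 + s • A)⁻¹)ᵀ *ᵥ b)))
      (Phi d (t, A, a, b)) t := by
  obtain ⟨u, hu'⟩ := hu
  have hdet := hasDerivAt_det_aux A t ⟨u, hu'⟩
  set R := (1 + t • A)⁻¹ with hR
  set I := -((1 + t • A)⁻¹ * A * (1 + t • A)⁻¹) with hI
  have hXa : ∀ k, HasDerivAt (fun s : ℝ => (((1 + s • A)⁻¹)ᵀ *ᵥ a) k) ((Iᵀ *ᵥ a) k) t := by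
    intro k
    have h := HasDerivAt.fun_sum (u := Finset.univ)
      (fun i _ => (hasDerivAt_inv_entry A t u hu' i k).mul_const (a i))
    simpa [Matrix.mulVec, dotProduct, Matrix.transpose_apply, hI, Matrix.neg_apply] using h
  have hXb : ∀ k, HasDerivAt (fun s : ℝ => (((1 + s • A)⁻¹)ᵀ *ᵥ b) k) ((Iᵀ *ᵥ b) k) t := by
    intro k
    have h := HasDerivAt.fun_sum (u := Finset.univ)
      (fun i _ => (hasDerivAt_inv_entry A t u hu' i k).mul_const (b i))
    simpa [Matrix.mulVec, dotProduct, Matrix.transpose_apply, hI, Matrix.neg_apply] using h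
  have hdot : HasDerivAt (fun s : ℝ =>
      ∑ k, (((1 + s • A)⁻¹)ᵀ *ᵥ a) k * (((1 + s • A)⁻¹)ᵀ *ᵥ b) k)
      (∑ k, ((Iᵀ *ᵥ a) k * ((Rᵀ) *ᵥ b) k + ((Rᵀ) *ᵥ a) k * (Iᵀ *ᵥ b) k)) t :=
    HasDerivAt.fun_sum (fun k _ => (hXa k).fun_mul (hXb k))
  have hmain := hdet.fun_mul hdot
  have hfun : (fun s : ℝ => (1 + s • A).det *
      ∑ k, (((1 + s • A)⁻¹)ᵀ *ᵥ a) k * (((1 + s • A)⁻¹)ᵀ *ᵥ b) k) =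
      fun s : ℝ => (1 + s • A).det *
        ((((1 + s • A)⁻¹)ᵀ *ᵥ a) ⬝ᵥ (((1 + s • A)⁻¹)ᵀ *ᵥ b)) := by
    funext s; rfl
  rw [hfun] at hmain
  refine hmain.congr_deriv (Eq.symm ?_)
  show Psi d (t, A, a, b) R = _
  simp only [Psi, dotProduct, Finset.sum_add_distrib, Finset.mul_sum]
  try rw [← Finset.sum_add_distrib]
  try ring_nf

private theorem Phi_zero (A : Matrix (Fin d) (Fin d) ℝ) (a b : Fin d → ℝ) :
    Phi d (0, A, a, b) = A.trace * (a ⬝ᵥ b) - a ⬝ᵥ ((A + Aᵀ) *ᵥ b) := by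
  have h1 : (Aᵀ *ᵥ a) ⬝ᵥ b = a ⬝ᵥ (A *ᵥ b) := by
    rw [Matrix.mulVec_transpose, ← Matrix.dotProduct_mulVec]
  simp only [Phi, Psi, zero_smul, add_zero, Matrix.det_one, inv_one, Matrix.one_mul,
    Matrix.mul_one, Matrix.transpose_one, Matrix.one_mulVec, Matrix.transpose_neg,
    Matrix.neg_mulVec, neg_dotProduct, dotProduct_neg, one_mul,
    Matrix.add_mulVec, dotProduct_add, h1]
  ring

private theorem contOn_Phi (s : Set (ℝ × Matrix (Fin d) (Fin d) ℝ × (Fin d → ℝ) × (Fin d → ℝ)))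
    (hs : ∀ p ∈ s, (1 + p.1 • p.2.1).det ≠ 0) : ContinuousOn (Phi d) s := by
  have hB : Continuous fun p : ℝ × Matrix (Fin d) (Fin d) ℝ × (Fin d → ℝ) × (Fin d → ℝ) =>
      1 + p.1 • p.2.1 := continuous_const.add (continuous_fst.smul (continuous_snd.fst))
  have hPsi : Continuous fun q : (ℝ × Matrix (Fin d) (Fin d) ℝ × (Fin d → ℝ) × (Fin d → ℝ)) ×
      Matrix (Fin d) (Fin d) ℝ => Psi d q.1 q.2 := by
    have hB1 : Continuous fun q : (ℝ × Matrix (Fin d) (Fin d) ℝ × (Fin d → ℝ) × (Fin d → ℝ)) ×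
        Matrix (Fin d) (Fin d) ℝ => 1 + q.1.1 • q.1.2.1 := hB.comp continuous_fst
    have hA : Continuous fun q : (ℝ × Matrix (Fin d) (Fin d) ℝ × (Fin d → ℝ) × (Fin d → ℝ)) ×
        Matrix (Fin d) (Fin d) ℝ => q.1.2.1 := continuous_fst.snd.fst
    have ha : Continuous fun q : (ℝ × Matrix (Fin d) (Fin d) ℝ × (Fin d → ℝ) × (Fin d → ℝ)) ×
        Matrix (Fin d) (Fin d) ℝ => q.1.2.2.1 := continuous_fst.snd.snd.fst
    have hb : Continuous fun q : (ℝ × Matrix (Fin d) (Fin d) ℝ × (Fin d → ℝ) × (Fin d → ℝ)) ×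
        Matrix (Fin d) (Fin d) ℝ => q.1.2.2.2 := continuous_fst.snd.snd.snd
    have hR : Continuous fun q : (ℝ × Matrix (Fin d) (Fin d) ℝ × (Fin d → ℝ) × (Fin d → ℝ)) ×
        Matrix (Fin d) (Fin d) ℝ => q.2 := continuous_snd
    exact ((hB1.matrix_det.mul ((hR.matrix_mul hA).matrix_trace)).mul
        ((hR.matrix_transpose.matrix_mulVec ha).dotProduct
          (hR.matrix_transpose.matrix_mulVec hb))).add
      (hB1.matrix_det.mul
        ((((((hR.matrix_mul hA).matrix_mul hR).neg).matrix_transpose.matrix_mulVec ha).dotProduct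
            (hR.matrix_transpose.matrix_mulVec hb)).add
          ((hR.matrix_transpose.matrix_mulVec ha).dotProduct
            ((((hR.matrix_mul hA).matrix_mul hR).neg).matrix_transpose.matrix_mulVec hb))))
  intro p hp
  have hinv : ContinuousAt (fun p : ℝ × Matrix (Fin d) (Fin d) ℝ × (Fin d → ℝ) × (Fin d → ℝ) =>
      (1 + p.1 • p.2.1)⁻¹) p := by
    apply ContinuousAt.comp (continuousAt_matrix_inv _ ?_) hB.continuousAt
    rw [Ring.inverse_eq_inv']
    exact continuousAt_inv₀ (hs p hp)
  exact (hPsi.continuousAt.comp (continuousAt_id.prodMk hinv)).continuousWithinAt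

end StmtAux


/-- Derivative of the pulled-back Dirichlet form: with gradients `Gu, Gl` of `u, λ`,
Jacobian matrix `DV` of the `C¹` compactly supported vector field `V`, the map
`e(t) = ∫_Ω det(1 + t DV) ⟨(1 + t DV)⁻ᵀ ∇u, (1 + t DV)⁻ᵀ ∇λ⟩` is differentiable at `0`
with `e′(0) = ∫_Ω (div V ⟨∇u,∇λ⟩ − ⟨∇u, (DV + DVᵀ)∇λ⟩)`. -/
theorem stmt_15 (d : ℕ) (Ω : Set (Fin d → ℝ))
    (hΩm : MeasurableSet Ω) (hΩb : Bornology.IsBounded Ω)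
    (u lam : (Fin d → ℝ) → ℝ) (Gu Gl : (Fin d → ℝ) → (Fin d → ℝ))
    (hu : ContDiff ℝ 1 u) (hlam : ContDiff ℝ 1 lam)
    (hGu : ∀ x h, fderiv ℝ u x h = Gu x ⬝ᵥ h)
    (hGl : ∀ x h, fderiv ℝ lam x h = Gl x ⬝ᵥ h)
    (hGub : ∃ M : ℝ, ∀ x, ‖Gu x‖ ≤ M) (hGlb : ∃ M : ℝ, ∀ x, ‖Gl x‖ ≤ M)
    (V : (Fin d → ℝ) → (Fin d → ℝ)) (DV : (Fin d → ℝ) → Matrix (Fin d) (Fin d) ℝ)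
    (hV : ContDiff ℝ 1 V) (hVc : HasCompactSupport V)
    (hDV : ∀ x h, fderiv ℝ V x h = DV x *ᵥ h) :
    HasDerivAt (fun t : ℝ => ∫ x in Ω,
        (1 + t • DV x).det *
          ((((1 + t • DV x)⁻¹)ᵀ *ᵥ Gu x) ⬝ᵥ (((1 + t • DV x)⁻¹)ᵀ *ᵥ Gl x)))
      (∫ x in Ω,
        (DV x).trace * (Gu x ⬝ᵥ Gl x) - Gu x ⬝ᵥ ((DV x + (DV x)ᵀ) *ᵥ Gl x)) 0 := by
  obtain ⟨Mu, hMu⟩ := hGub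
  obtain ⟨Ml, hMl⟩ := hGlb
  have hMu0 : 0 ≤ Mu := le_trans (norm_nonneg _) (hMu 0)
  have hMl0 : 0 ≤ Ml := le_trans (norm_nonneg _) (hMl 0)
  -- continuity of the data
  have hVfd : Continuous (fderiv ℝ V) := hV.continuous_fderiv one_ne_zero
  have hDVeq : DV = fun x => Matrix.of fun i j => fderiv ℝ V x (Pi.single j 1) i := by
    funext x
    ext i j
    have h := congrFun (hDV x (Pi.single j 1)) i
    rw [Matrix.mulVec_single] at h
    simpa using h.symm
  have hDVc : Continuous DV := by
    rw [hDVeq]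
    refine continuous_matrix fun i j => ?_
    exact (continuous_apply i).comp (hVfd.clm_apply continuous_const)
  have hGuc : Continuous Gu := by
    have : Gu = fun x i => fderiv ℝ u x (Pi.single i 1) := by
      funext x i
      have h := hGu x (Pi.single i 1)
      rw [dotProduct_single, mul_one] at h
      exact h.symm
    rw [this]
    exact continuous_pi fun i => (hu.continuous_fderiv one_ne_zero).clm_apply continuous_const
  have hGlc : Continuous Gl := by
    have : Gl = fun x i => fderiv ℝ lam x (Pi.single i 1) := by
      funext x i
      have h := hGl x (Pi.single i 1)
      rw [dotProduct_single, mul_one] at h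
      exact h.symm
    rw [this]
    exact continuous_pi fun i => (hlam.continuous_fderiv one_ne_zero).clm_apply continuous_const
  -- compact range of DV
  have hfdsupp : HasCompactSupport (fderiv ℝ V) := hVc.fderiv (𝕜 := ℝ)
  set KA := insert (0 : Matrix (Fin d) (Fin d) ℝ) (DV '' tsupport (fderiv ℝ V)) with hKA
  have hKAc : IsCompact KA := ((hfdsupp : IsCompact _).image hDVc).insert 0
  have hKAmem : ∀ x, DV x ∈ KA := by
    intro x
    by_cases hx : x ∈ tsupport (fderiv ℝ V)
    · exact Set.mem_insert_of_mem _ ⟨x, hx, rfl⟩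
    · have h0 : fderiv ℝ V x = 0 := image_eq_zero_of_notMem_tsupport hx
      have : DV x = 0 := by
        rw [hDVeq]
        ext i j
        simp [h0]
      rw [this]; exact Set.mem_insert _ _
  obtain ⟨Cb, hCb⟩ : ∃ Cb, ∀ A ∈ KA, ‖A‖ ≤ Cb :=
    hKAc.exists_bound_of_continuousOn continuousOn_id
  have hCb0 : 0 ≤ Cb := le_trans (norm_nonneg _) (hCb 0 (Set.mem_insert _ _))
  set ε := (2 * (Cb + 1))⁻¹ with hε
  have hεpos : 0 < ε := by positivity
  have hεC : ε * Cb < 1 := by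
    rw [hε]
    rw [inv_mul_lt_iff₀ (by positivity)]
    nlinarith
  have hunit : ∀ t : ℝ, |t| ≤ ε → ∀ A ∈ KA, IsUnit (1 + t • A) := by
    intro t ht A hA
    have hn : ‖-(t • A)‖ < 1 := by
      rw [norm_neg, norm_smul, Real.norm_eq_abs]
      calc |t| * ‖A‖ ≤ ε * Cb :=
            mul_le_mul ht (hCb A hA) (norm_nonneg _) (le_of_lt hεpos)
        _ < 1 := hεC
    have := (Units.oneSub _ hn).isUnit
    simpa [sub_neg_eq_add] using this
  have hdet_ne : ∀ t : ℝ, |t| ≤ ε → ∀ A ∈ KA, (1 + t • A).det ≠ 0 := by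
    intro t ht A hA
    exact ((Matrix.isUnit_iff_isUnit_det _).mp (hunit t ht A hA)).ne_zero
  -- compact parameter set and uniform bound
  set S := Set.Icc (-ε) ε ×ˢ (KA ×ˢ
      (closedBall (0 : Fin d → ℝ) Mu ×ˢ closedBall (0 : Fin d → ℝ) Ml)) with hS
  have hScomp : IsCompact S :=
    isCompact_Icc.prod (hKAc.prod ((isCompact_closedBall _ _).prod (isCompact_closedBall _ _)))
  have hmemS : ∀ t : ℝ, |t| ≤ ε → ∀ x, (t, DV x, Gu x, Gl x) ∈ S := by
    intro t ht x
    refine ⟨?_, hKAmem x, ?_, ?_⟩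
    · rw [Set.mem_Icc]; exact abs_le.mp ht
    · exact mem_closedBall_zero_iff.mpr (hMu x)
    · exact mem_closedBall_zero_iff.mpr (hMl x)
  have hPhiOn : ContinuousOn (Phi d) S := by
    refine contOn_Phi S fun p hp => ?_
    exact hdet_ne p.1 (abs_le.mpr ⟨hp.1.1, hp.1.2⟩) p.2.1 hp.2.1
  obtain ⟨K, hK⟩ : ∃ K, ∀ p ∈ S, ‖Phi d p‖ ≤ K :=
    hScomp.exists_bound_of_continuousOn hPhiOn
  -- finite measure
  haveI : IsFiniteMeasure (volume.restrict Ω) := by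
    constructor
    rw [Measure.restrict_apply_univ]
    exact hΩb.measure_lt_top
  -- the integrand and its derivative
  set F : ℝ → (Fin d → ℝ) → ℝ := fun t x => (1 + t • DV x).det *
      ((((1 + t • DV x)⁻¹)ᵀ *ᵥ Gu x) ⬝ᵥ (((1 + t • DV x)⁻¹)ᵀ *ᵥ Gl x)) with hFdef
  set F' : ℝ → (Fin d → ℝ) → ℝ := fun t x => Phi d (t, DV x, Gu x, Gl x) with hF'def
  have hFcont : ∀ t : ℝ, |t| ≤ ε → Continuous (F t) := by
    intro t ht
    have hBc : Continuous fun x => 1 + t • DV x := continuous_const.add (hDVc.const_smul t)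
    have hRc : Continuous fun x => (1 + t • DV x)⁻¹ := by
      rw [continuous_iff_continuousAt]
      intro x
      refine ContinuousAt.comp (continuousAt_matrix_inv _ ?_) hBc.continuousAt
      rw [Ring.inverse_eq_inv']
      exact continuousAt_inv₀ (hdet_ne t ht (DV x) (hKAmem x))
    exact hBc.matrix_det.mul ((hRc.matrix_transpose.matrix_mulVec hGuc).dotProduct
      (hRc.matrix_transpose.matrix_mulVec hGlc))
  have habs0 : |(0:ℝ)| ≤ ε := by rw [abs_zero]; exact le_of_lt hεpos
  have hF'0c : Continuous (F' 0) := by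
    have hmap : Continuous fun x => ((0:ℝ), DV x, Gu x, Gl x) :=
      continuous_const.prodMk (hDVc.prodMk (hGuc.prodMk hGlc))
    exact hPhiOn.comp_continuous hmap (fun x => hmemS 0 habs0 x)
  -- apply differentiation under the integral sign
  have main := hasDerivAt_integral_of_dominated_loc_of_deriv_le (μ := volume.restrict Ω)
      (F := F) (F' := F') (x₀ := (0:ℝ)) (bound := fun _ => K) (s := ball (0:ℝ) ε) (Metric.ball_mem_nhds (0:ℝ) hεpos)
    (by
      filter_upwards [Metric.ball_mem_nhds (0:ℝ) hεpos] with t ht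
      have ht' : |t| ≤ ε := le_of_lt (by simpa [Real.dist_eq] using mem_ball_iff_norm.mp ht)
      exact (hFcont t ht').aestronglyMeasurable)
    (by
      have hF0 : F 0 = fun x => Gu x ⬝ᵥ Gl x := by
        funext x
        simp [hFdef]
      rw [hF0]
      refine Integrable.mono' (integrable_const ((d : ℝ) * (Mu * Ml)))
        (hGuc.dotProduct hGlc).aestronglyMeasurable
        (Filter.Eventually.of_forall fun x => ?_)
      rw [Real.norm_eq_abs, dotProduct]
      calc |∑ i, Gu x i * Gl x i| ≤ ∑ i, |Gu x i * Gl x i| := Finset.abs_sum_le_sum_abs _ _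
        _ ≤ ∑ _i : Fin d, Mu * Ml := by
            refine Finset.sum_le_sum fun i _ => ?_
            rw [abs_mul]
            refine mul_le_mul ?_ ?_ (abs_nonneg _) hMu0
            · exact le_trans (le_trans (le_of_eq (Real.norm_eq_abs _).symm)
                (norm_le_pi_norm (Gu x) i)) (hMu x)
            · exact le_trans (le_trans (le_of_eq (Real.norm_eq_abs _).symm)
                (norm_le_pi_norm (Gl x) i)) (hMl x)
        _ = (d : ℝ) * (Mu * Ml) := by
            rw [Finset.sum_const, Finset.card_univ, Fintype.card_fin, nsmul_eq_mul])
    hF'0c.aestronglyMeasurable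
    (Filter.Eventually.of_forall fun x t ht => by
      have ht' : |t| ≤ ε := le_of_lt (by simpa [Real.dist_eq] using mem_ball_iff_norm.mp ht)
      exact hK _ (hmemS t ht' x))
    (integrable_const K)
    (Filter.Eventually.of_forall fun x t ht => by
      have ht' : |t| ≤ ε := le_of_lt (by simpa [Real.dist_eq] using mem_ball_iff_norm.mp ht)
      exact hasDerivAt_main (DV x) (Gu x) (Gl x) t (hunit t ht' (DV x) (hKAmem x)))
  have h2 := main.2
  have hval : (fun x => F' 0 x) = fun x =>
      (DV x).trace * (Gu x ⬝ᵥ Gl x) - Gu x ⬝ᵥ ((DV x + (DV x)ᵀ) *ᵥ Gl x) := by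
    funext x
    exact Phi_zero (DV x) (Gu x) (Gl x)
  rw [hval] at h2
  exact h2
end
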